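/- Let T_{n,k} be the dendrimer with k ≥ 3, and let n²_ℓ denote the number of paths of length ℓ in T_{n,k} both of whose endpoints are leaves. Then for even ℓ with 2 ≤ ℓ ≤ 2n-2, n²_ℓ = k(k-1)^{n + ℓ/2 - 3}·C(k-1,2), and for ℓ = 2n, n²_{2n} = (k-1)^{2n-2}·C(k,2). -/

import Mathlib

open scoped Classical in
/-- A dendrimer `T_{n,k}`: a tree of radius `n` rooted at `r` in which every vertex at
distance less than `n` from the root has degree `k`, and every vertex at distance `n`
from the root is a leaf. -/
noncomputable def IsDendrimer {V : Type*} [Fintype V] (G : SimpleGraph V) (r : V) (n k : ℕ) : Prop :=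
  G.Connected ∧ G.IsAcyclic ∧ (∀ v, G.dist r v ≤ n) ∧ (∃ v, G.dist r v = n) ∧
    (∀ v, G.dist r v < n → G.degree v = k) ∧ (∀ v, G.dist r v = n → G.degree v = 1)

/-- The number of (unordered) paths of length `ℓ ≥ 1` in a tree: since a tree has a unique
path between any two vertices, this is the number of unordered pairs at distance `ℓ`. -/
noncomputable def pathCount {V : Type*} (G : SimpleGraph V) (ℓ : ℕ) : ℕ :=
  Nat.card {e : Sym2 V // ∃ u v : V, e = s(u, v) ∧ G.dist u v = ℓ}

open scoped Classical in
/-- The number of paths of length `ℓ` with exactly one endpoint a leaf. -/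
noncomputable def pathCount1 {V : Type*} [Fintype V] (G : SimpleGraph V) (ℓ : ℕ) : ℕ :=
  Nat.card {e : Sym2 V // ∃ u v : V, e = s(u, v) ∧ G.dist u v = ℓ ∧
    G.degree u = 1 ∧ G.degree v ≠ 1}

open scoped Classical in
/-- The number of paths of length `ℓ` with both endpoints leaves. -/
noncomputable def pathCount2 {V : Type*} [Fintype V] (G : SimpleGraph V) (ℓ : ℕ) : ℕ :=
  Nat.card {e : Sym2 V // ∃ u v : V, e = s(u, v) ∧ G.dist u v = ℓ ∧
    G.degree u = 1 ∧ G.degree v = 1}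

open SimpleGraph Finset

namespace DendrimerAux

variable {V : Type*} {G : SimpleGraph V} {r u v w : V}

noncomputable local instance : DecidableEq V := Classical.decEq V

/-- parent function: a neighbor one level closer to the root. -/
noncomputable def par (G : SimpleGraph V) (r : V) (v : V) : V :=
  letI := Classical.dec (∃ w, G.Adj w v ∧ G.dist r w + 1 = G.dist r v)
  if h : ∃ w, G.Adj w v ∧ G.dist r w + 1 = G.dist r v then h.choose else r

lemma parent_exists (hc : G.Connected) (hv : G.dist r v ≠ 0) :
    ∃ w, G.Adj w v ∧ G.dist r w + 1 = G.dist r v := by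
  obtain ⟨p, hp, hlen⟩ := hc.exists_path_of_dist v r
  have hcomm : G.dist v r = G.dist r v := G.dist_comm
  cases p with
  | nil => simp at hv
  | @cons _ x _ h q =>
    refine ⟨x, h.symm, ?_⟩
    have h1 : G.dist r x ≤ q.reverse.length := G.dist_le q.reverse
    have h2 : q.length = G.dist r v - 1 := by
      simp at hlen; omega
    have h3 : G.dist r v ≤ G.dist r x + 1 := by
      have := hc.dist_triangle (u := r) (v := x) (w := v)
      have hd1 : G.dist x v = 1 := SimpleGraph.dist_eq_one_iff_adj.2 h.symm
      omega
    simp at h1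
    omega

lemma par_spec (hc : G.Connected) (hv : G.dist r v ≠ 0) :
    G.Adj (par G r v) v ∧ G.dist r (par G r v) + 1 = G.dist r v := by
  rw [par]
  have h := parent_exists hc hv
  split
  · exact h.choose_spec
  · exact absurd h (by assumption)

lemma concat_isPath {p : G.Walk r u} (hp : p.IsPath) (h : G.Adj u v)
    (hv : v ∉ p.support) : (p.concat h).IsPath := by
  rw [← SimpleGraph.Walk.isPath_reverse_iff, SimpleGraph.Walk.reverse_concat]
  rw [SimpleGraph.Walk.cons_isPath_iff]
  exact ⟨hp.reverse, by simpa using hv⟩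

lemma parent_unique (hc : G.Connected) (ha : G.IsAcyclic) {w1 w2 : V}
    (h1 : G.Adj w1 v) (e1 : G.dist r w1 + 1 = G.dist r v)
    (h2 : G.Adj w2 v) (e2 : G.dist r w2 + 1 = G.dist r v) : w1 = w2 := by
  obtain ⟨p1, hp1, hl1⟩ := hc.exists_path_of_dist r w1
  obtain ⟨p2, hp2, hl2⟩ := hc.exists_path_of_dist r w2
  have hv1 : v ∉ p1.support := by
    intro hmem
    have := SimpleGraph.Walk.length_takeUntil_le p1 hmem
    have hd : G.dist r v ≤ (p1.takeUntil v hmem).length := G.dist_le _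
    omega
  have hv2 : v ∉ p2.support := by
    intro hmem
    have := SimpleGraph.Walk.length_takeUntil_le p2 hmem
    have hd : G.dist r v ≤ (p2.takeUntil v hmem).length := G.dist_le _
    omega
  have hq1 := concat_isPath hp1 h1 hv1
  have hq2 := concat_isPath hp2 h2 hv2
  have := SimpleGraph.isAcyclic_iff_path_unique.1 ha ⟨p1.concat h1, hq1⟩ ⟨p2.concat h2, hq2⟩
  have heq : p1.concat h1 = p2.concat h2 := congrArg Subtype.val this
  obtain ⟨hv, -⟩ := SimpleGraph.Walk.concat_inj heq
  exact hv

/-- adjacent vertices are on consecutive levels -/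
lemma adj_level (hc : G.Connected) (ha : G.IsAcyclic) (h : G.Adj u v) :
    G.dist r u + 1 = G.dist r v ∨ G.dist r v + 1 = G.dist r u := by
  have huv : G.dist u v = 1 := dist_eq_one_iff_adj.2 h
  have hvu : G.dist v u = 1 := dist_eq_one_iff_adj.2 h.symm
  have t1 : G.dist r v ≤ G.dist r u + 1 := by
    have := hc.dist_triangle (u := r) (v := u) (w := v); omega
  have t2 : G.dist r u ≤ G.dist r v + 1 := by
    have := hc.dist_triangle (u := r) (v := v) (w := u); omega
  by_contra hcon
  push_neg at hcon
  have hne : G.dist r u = G.dist r v := by omega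
  -- derive a contradiction: two distinct paths from r to v
  obtain ⟨p, hp, hl⟩ := hc.exists_path_of_dist r u
  obtain ⟨q, hq, hlq⟩ := hc.exists_path_of_dist r v
  have hvp : v ∉ p.support := by
    intro hmem
    have h1 := SimpleGraph.Walk.length_takeUntil_le p hmem
    have hd : G.dist r v ≤ (p.takeUntil v hmem).length := G.dist_le _
    have hsum : (p.takeUntil v hmem).length + (p.dropUntil v hmem).length = p.length := by
      have h0 := congrArg SimpleGraph.Walk.length (p.take_spec hmem)
      rw [SimpleGraph.Walk.length_append] at h0
      exact h0
    have hdrop : G.dist v u ≤ (p.dropUntil v hmem).length := G.dist_le _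
    omega
  have hq1 := concat_isPath hp h hvp
  have := SimpleGraph.isAcyclic_iff_path_unique.1 ha ⟨p.concat h, hq1⟩ ⟨q, hq⟩
  have heq : p.concat h = q := congrArg Subtype.val this
  have : (p.concat h).length = q.length := congrArg SimpleGraph.Walk.length heq
  rw [SimpleGraph.Walk.length_concat] at this
  omega


/-- ancestor of `v` at level `j` -/
noncomputable def anc (G : SimpleGraph V) (r : V) (j : ℕ) (v : V) : V :=
  (par G r)^[G.dist r v - j] v

lemma lv_iter (hc : G.Connected) :
    ∀ i, i ≤ G.dist r v → G.dist r ((par G r)^[i] v) = G.dist r v - i := by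
  intro i
  induction i with
  | zero => simp
  | succ m ih =>
    intro hm
    have hmv : m ≤ G.dist r v := by omega
    have hlv := ih hmv
    have hne : G.dist r ((par G r)^[m] v) ≠ 0 := by omega
    have := (par_spec hc hne).2
    rw [Function.iterate_succ_apply']
    omega

lemma dist_iter (hc : G.Connected) :
    ∀ i, i ≤ G.dist r v → G.dist v ((par G r)^[i] v) ≤ i := by
  intro i
  induction i with
  | zero => simp
  | succ m ih =>
    intro hm
    have hmv : m ≤ G.dist r v := by omega
    have hlv := lv_iter hc m hmv
    have hne : G.dist r ((par G r)^[m] v) ≠ 0 := by omega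
    have hadj := (par_spec hc hne).1
    have h1 : G.dist ((par G r)^[m] v) ((par G r)^[m+1] v) = 1 := by
      rw [Function.iterate_succ_apply']
      exact SimpleGraph.dist_eq_one_iff_adj.2 hadj.symm
    have := hc.dist_triangle (u := v) (v := (par G r)^[m] v) (w := (par G r)^[m+1] v)
    have := ih hmv
    omega

lemma anc_lv (hc : G.Connected) {j : ℕ} (hj : j ≤ G.dist r v) :
    G.dist r (anc G r j v) = j := by
  rw [anc]
  have := lv_iter (r := r) (v := v) hc (G.dist r v - j) (by omega)
  omega

lemma anc_self : anc G r (G.dist r v) v = v := by simp [anc]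

lemma anc_zero (hc : G.Connected) : anc G r 0 v = r := by
  have := anc_lv (r := r) (v := v) hc (j := 0) (by omega)
  exact ((hc.dist_eq_zero_iff).1 this).symm

lemma anc_anc (hc : G.Connected) {i j : ℕ} (hij : i ≤ j) (hj : j ≤ G.dist r v) :
    (par G r)^[j - i] (anc G r j v) = anc G r i v := by
  rw [anc, anc, ← Function.iterate_add_apply]
  congr 1
  omega

lemma dist_anc (hc : G.Connected) {j : ℕ} (hj : j ≤ G.dist r v) :
    G.dist v (anc G r j v) ≤ G.dist r v - j :=
  dist_iter hc _ (by omega)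

/-- upper bound on distance via a common ancestor -/
lemma dist_ub (hc : G.Connected) {j : ℕ} (hju : j ≤ G.dist r u) (hjv : j ≤ G.dist r v)
    (h : anc G r j u = anc G r j v) :
    G.dist u v + 2 * j ≤ G.dist r u + G.dist r v := by
  have h1 := dist_anc (v := u) hc hju
  have h2 := dist_anc (v := v) hc hjv
  have h3 := hc.dist_triangle (u := u) (v := anc G r j u) (w := v)
  have h4 : G.dist (anc G r j u) v = G.dist v (anc G r j v) := by
    rw [h]; exact G.dist_comm
  omega

open scoped Classical

/-- the level at which the ancestor chains of `u` and `v` meet -/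
noncomputable def meetLv (G : SimpleGraph V) (r : V) (u v : V) : ℕ :=
  Nat.findGreatest (fun j => anc G r j u = anc G r j v) (min (G.dist r u) (G.dist r v))

lemma meet_le : meetLv G r u v ≤ min (G.dist r u) (G.dist r v) :=
  Nat.findGreatest_le _

lemma meet_spec (hc : G.Connected) :
    anc G r (meetLv G r u v) u = anc G r (meetLv G r u v) v :=
  Nat.findGreatest_spec (P := fun j => anc G r j u = anc G r j v) (m := 0) (Nat.zero_le _)
    (show anc G r 0 u = anc G r 0 v by
      rw [anc_zero (r := r) (v := u) hc, anc_zero (r := r) (v := v) hc])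

lemma le_meet {j : ℕ} (hj : j ≤ min (G.dist r u) (G.dist r v))
    (h : anc G r j u = anc G r j v) : j ≤ meetLv G r u v :=
  Nat.le_findGreatest hj h

lemma anc_par (hc : G.Connected) (hv : G.dist r v ≠ 0) {j : ℕ}
    (hj : j + 1 ≤ G.dist r v) : anc G r j (par G r v) = anc G r j v := by
  have hlv := (par_spec hc hv).2
  rw [anc, anc, ← Function.iterate_succ_apply]
  congr 1
  omega

/-- The key distance formula in a tree:
`dist u v = level u + level v - 2 * (level of the meet)`. -/
theorem dist_add_meet (hc : G.Connected) (ha : G.IsAcyclic) :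
    ∀ L u v, G.dist u v = L →
      G.dist u v + 2 * meetLv G r u v = G.dist r u + G.dist r v := by
  intro L
  induction L using Nat.strong_induction_on with
  | _ L IH =>
  intro u v hL
  by_cases huv : u = v
  · subst huv
    have h0 : G.dist u u = 0 := by simp
    have hm : meetLv G r u u = G.dist r u := by
      refine le_antisymm (le_trans (meet_le (u := u) (v := u)) (by omega)) (le_meet (u := u) (v := u) (by omega) rfl)
    omega
  · have hL0 : L ≠ 0 := by
      intro h; subst h
      exact huv ((hc.dist_eq_zero_iff).1 hL)
    obtain ⟨p, hp, hlen⟩ := hc.exists_path_of_dist u v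
    cases p with
    | nil => exact absurd rfl huv
    | @cons _ x _ hadj q =>
      have hqlen : q.length = L - 1 := by
        simp at hlen; omega
      have hxvle : G.dist x v ≤ L - 1 := by
        have := G.dist_le q; omega
      have hux : G.dist u x = 1 := SimpleGraph.dist_eq_one_iff_adj.2 hadj
      have htri : G.dist u v ≤ G.dist u x + G.dist x v := hc.dist_triangle
      have hxv : G.dist x v = L - 1 := by omega
      have IHx := IH (L - 1) (by omega) x v hxv
      rcases adj_level (r := r) hc ha hadj with hcase | hcase
      · -- Case B : x is a child of u
        have hx0 : G.dist r x ≠ 0 := by omega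
        have hps := par_spec (v := x) hc hx0
        have hpx : par G r x = u := parent_unique hc ha hps.1 hps.2 hadj hcase
        by_cases hsub : G.dist r x ≤ G.dist r v ∧ anc G r (G.dist r x) v = x
        · obtain ⟨hxle, hancv⟩ := hsub
          have hmxv : meetLv G r x v = G.dist r x := by
            refine le_antisymm (le_trans (meet_le (u := x) (v := v)) (by omega)) ?_
            refine le_meet (u := x) (v := v) (by omega) ?_
            rw [anc_self]; exact hancv.symm
          have hancu : anc G r (G.dist r u) v = u := by
            have h2 := anc_anc (v := v) hc (i := G.dist r u) (j := G.dist r x)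
              (by omega) hxle
            rw [hancv] at h2
            have h3 : G.dist r x - G.dist r u = 1 := by omega
            rw [h3] at h2
            simpa [hpx] using h2.symm
          have hmuv : meetLv G r u v = G.dist r u := by
            refine le_antisymm (le_trans (meet_le (u := u) (v := v)) (by omega)) ?_
            refine le_meet (u := u) (v := v) (by omega) ?_
            rw [anc_self]; exact hancu.symm
          omega
        · exfalso
          have hD'le := meet_le (G := G) (r := r) (u := x) (v := v)
          have hD'spec := meet_spec (G := G) (r := r) (u := x) (v := v) hc
          set D' := meetLv G r x v with hD'
          have hD'lu : D' ≤ G.dist r u := by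
            by_contra hgt
            push_neg at hgt
            have hD'x : D' = G.dist r x := by omega
            refine hsub ⟨by omega, ?_⟩
            rw [hD'x, anc_self] at hD'spec
            exact hD'spec.symm
          have hancxu : anc G r D' x = anc G r D' u := by
            rw [← hpx]
            exact (anc_par hc hx0 (by omega)).symm
          have hub := dist_ub (r := r) hc (j := D') (u := u) (v := v) (by omega) (by omega)
            (by rw [← hancxu]; exact hD'spec)
          omega
      · -- Case A : x = par u
        have hu0 : G.dist r u ≠ 0 := by omega
        have hps := par_spec (v := u) hc hu0
        have hx : x = par G r u := parent_unique hc ha hadj.symm hcase hps.1 hps.2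
        have hnotanc : ¬ (G.dist r u ≤ G.dist r v ∧ anc G r (G.dist r u) v = u) := by
          rintro ⟨hle', hanc⟩
          have hub := dist_ub (r := r) hc (j := G.dist r u) (u := u) (v := v) le_rfl hle'
            (by rw [anc_self]; exact hanc.symm)
          have hlow : G.dist r v ≤ G.dist r x + G.dist x v := hc.dist_triangle
          omega
        have hD'le := meet_le (G := G) (r := r) (u := x) (v := v)
        have hD'spec := meet_spec (G := G) (r := r) (u := x) (v := v) hc
        set D' := meetLv G r x v with hD'
        have hancxu : ∀ j, j ≤ G.dist r x → anc G r j x = anc G r j u := by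
          intro j hj
          rw [hx]
          exact anc_par hc hu0 (by omega)
        have h1 : D' ≤ meetLv G r u v := by
          refine le_meet (u := u) (v := v) (by omega) ?_
          rw [← hancxu D' (by omega)]; exact hD'spec
        have h2 : meetLv G r u v ≤ D' := by
          have hDle := meet_le (G := G) (r := r) (u := u) (v := v)
          have hDspec := meet_spec (G := G) (r := r) (u := u) (v := v) hc
          set D := meetLv G r u v with hDdef
          have hDlt : D < G.dist r u := by
            rcases Nat.lt_or_ge D (G.dist r u) with h | h
            · exact h
            · exfalso
              have hDeq : D = G.dist r u := by omega
              refine hnotanc ⟨by omega, ?_⟩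
              rw [hDeq, anc_self] at hDspec
              exact hDspec.symm
          refine le_meet (u := x) (v := v) (by omega) ?_
          rw [hancxu D (by omega)]; exact hDspec
        have hmeet : meetLv G r u v = D' := le_antisymm h2 h1
        omega


section Counting

variable [Fintype V] {n k : ℕ}

/-- vertices at level `j` -/
noncomputable def lvSet (G : SimpleGraph V) (r : V) (j : ℕ) : Finset V :=
  Finset.univ.filter (fun v => G.dist r v = j)

/-- children of `w` -/
noncomputable def chSet (G : SimpleGraph V) (r w : V) : Finset V :=
  Finset.univ.filter (fun c => G.Adj w c ∧ G.dist r c = G.dist r w + 1)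

/-- leaves below `w`, where `w` has level `j` -/
noncomputable def Sd (G : SimpleGraph V) (r : V) (n : ℕ) (j : ℕ) (w : V) : Finset V :=
  Finset.univ.filter (fun u => G.dist r u = n ∧ anc G r j u = w)

lemma lvSet_zero (hc : G.Connected) : lvSet G r 0 = {r} := by
  ext v
  simp only [lvSet, Finset.mem_filter, Finset.mem_univ, true_and, Finset.mem_singleton]
  rw [hc.dist_eq_zero_iff]
  exact comm

lemma card_chSet (hc : G.Connected) (ha : G.IsAcyclic)
    (hdeg : ∀ v, G.dist r v < n → G.degree v = k) {w : V} (hw : G.dist r w < n) :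
    (chSet G r w).card = if G.dist r w = 0 then k else k - 1 := by
  classical
  have hA : (Finset.univ.filter (fun c => G.Adj w c)).card = k := by
    rw [← hdeg w hw, SimpleGraph.degree, SimpleGraph.neighborFinset_eq_filter]
  have hsplit := Finset.card_filter_add_card_filter_not
    (s := Finset.univ.filter (fun c => G.Adj w c))
    (p := fun c => G.dist r c = G.dist r w + 1)
  have hch : chSet G r w =
      (Finset.univ.filter (fun c => G.Adj w c)).filter
        (fun c => G.dist r c = G.dist r w + 1) := by
    ext c
    simp only [chSet, Finset.mem_filter, Finset.mem_univ, true_and]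
  by_cases h0 : G.dist r w = 0
  · have hneg : (Finset.univ.filter (fun c => G.Adj w c)).filter
        (fun c => ¬ G.dist r c = G.dist r w + 1) = ∅ := by
      rw [Finset.filter_eq_empty_iff]
      intro c hcmem
      simp only [Finset.mem_filter, Finset.mem_univ, true_and] at hcmem
      rcases adj_level (r := r) hc ha hcmem with h | h
      · omega
      · simp only [not_not]; omega
    rw [if_pos h0, hch]
    rw [hneg, Finset.card_empty] at hsplit
    omega
  · have hps := par_spec (v := w) hc h0
    have hneg : (Finset.univ.filter (fun c => G.Adj w c)).filter
        (fun c => ¬ G.dist r c = G.dist r w + 1) = {par G r w} := by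
      ext c
      simp only [Finset.mem_filter, Finset.mem_univ, true_and, Finset.mem_singleton]
      constructor
      · rintro ⟨hadj, hne⟩
        rcases adj_level (r := r) hc ha hadj with h | h
        · omega
        · exact parent_unique hc ha hadj.symm h hps.1 hps.2
      · rintro rfl
        refine ⟨hps.1.symm, by omega⟩
    rw [if_neg h0, hch]
    rw [hneg, Finset.card_singleton] at hsplit
    omega

lemma Sd_decomp (hc : G.Connected) (ha : G.IsAcyclic) {j : ℕ} (hj : j < n) {w : V}
    (hw : G.dist r w = j) :
    Sd G r n j w = (chSet G r w).biUnion (fun c => Sd G r n (j + 1) c) := by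
  ext u
  simp only [Sd, chSet, Finset.mem_filter, Finset.mem_univ, true_and, Finset.mem_biUnion]
  constructor
  · rintro ⟨hu, hanc⟩
    have hj1 : j + 1 ≤ G.dist r u := by omega
    set c := anc G r (j + 1) u with hcdef
    have hlvc : G.dist r c = j + 1 := anc_lv hc hj1
    have hcne : G.dist r c ≠ 0 := by omega
    have hpar : par G r c = w := by
      have h2 := anc_anc (v := u) hc (i := j) (j := j + 1) (by omega) hj1
      have h3 : j + 1 - j = 1 := by omega
      rw [h3] at h2
      simp only [Function.iterate_one] at h2
      rw [← hcdef] at h2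
      rw [h2, hanc]
    have hadj := (par_spec (v := c) hc hcne).1
    rw [hpar] at hadj
    exact ⟨c, ⟨hadj, by omega⟩, hu, rfl⟩
  · rintro ⟨c, ⟨hadj, hlvc⟩, hu, hanc⟩
    refine ⟨hu, ?_⟩
    have hj1 : j + 1 ≤ G.dist r u := by omega
    have hcne : G.dist r c ≠ 0 := by omega
    have hps := par_spec (v := c) hc hcne
    have hpar : par G r c = w := parent_unique hc ha hps.1 hps.2 hadj (by omega)
    have h2 := anc_anc (v := u) hc (i := j) (j := j + 1) (by omega) hj1
    have h3 : j + 1 - j = 1 := by omega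
    rw [h3] at h2
    simp only [Function.iterate_one] at h2
    rw [hanc] at h2
    rw [← h2, hpar]

lemma Sd_disj {j : ℕ} {c1 c2 : V} (h : c1 ≠ c2) :
    Disjoint (Sd G r n j c1) (Sd G r n j c2) := by
  rw [Finset.disjoint_left]
  intro u h1 h2
  simp only [Sd, Finset.mem_filter] at h1 h2
  exact h (h1.2.2 ▸ h2.2.2 ▸ rfl)

lemma card_Sd (hc : G.Connected) (ha : G.IsAcyclic) (hn : 1 ≤ n)
    (hdeg : ∀ v, G.dist r v < n → G.degree v = k) :
    ∀ i j, j + i = n → ∀ w, G.dist r w = j →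
      (Sd G r n j w).card = if j = 0 then k * (k - 1) ^ (n - 1) else (k - 1) ^ i := by
  intro i
  induction i with
  | zero =>
    intro j hj w hw
    have hjn : j = n := by omega
    have : Sd G r n j w = {w} := by
      ext u
      simp only [Sd, Finset.mem_filter, Finset.mem_univ, true_and, Finset.mem_singleton]
      constructor
      · rintro ⟨hu, hanc⟩
        rw [← hanc, hjn, ← hu, anc_self]
      · rintro rfl
        subst hjn
        exact ⟨hw, by rw [← hw, anc_self]⟩
    rw [this, Finset.card_singleton, if_neg (by omega), pow_zero]
  | succ i IH =>
    intro j hj w hw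
    have hjn : j < n := by omega
    rw [Sd_decomp hc ha hjn hw, Finset.card_biUnion
      (fun c1 _ c2 _ h => Sd_disj (G := G) (r := r) (n := n) h)]
    have hsum : ∀ c ∈ chSet G r w, (Sd G r n (j + 1) c).card = (k - 1) ^ i := by
      intro c hcmem
      simp only [chSet, Finset.mem_filter, Finset.mem_univ, true_and] at hcmem
      have := IH (j + 1) (by omega) c (by omega)
      rwa [if_neg (by omega)] at this
    rw [Finset.sum_congr rfl hsum, Finset.sum_const, smul_eq_mul,
      card_chSet hc ha hdeg (by omega)]
    by_cases h0 : j = 0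
    · rw [if_pos (by omega), if_pos h0]
      have : i = n - 1 := by omega
      rw [this]
    · rw [if_neg (by omega), if_neg h0, pow_succ]
      ring

lemma lvSet_decomp (hc : G.Connected) (ha : G.IsAcyclic) {j : ℕ} :
    lvSet G r (j + 1) = (lvSet G r j).biUnion (fun w => chSet G r w) := by
  ext v
  simp only [lvSet, chSet, Finset.mem_filter, Finset.mem_univ, true_and, Finset.mem_biUnion]
  constructor
  · intro hv
    have hvne : G.dist r v ≠ 0 := by omega
    have hps := par_spec (v := v) hc hvne
    exact ⟨par G r v, by omega, hps.1, by omega⟩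
  · rintro ⟨w, hw, hadj, hlv⟩
    omega

lemma chSet_disj (hc : G.Connected) (ha : G.IsAcyclic) {j : ℕ} {w1 w2 : V}
    (h1 : G.dist r w1 = j) (h2 : G.dist r w2 = j) (h : w1 ≠ w2) :
    Disjoint (chSet G r w1) (chSet G r w2) := by
  rw [Finset.disjoint_left]
  intro c hc1 hc2
  simp only [chSet, Finset.mem_filter, Finset.mem_univ, true_and] at hc1 hc2
  exact h (parent_unique (r := r) (v := c) hc ha hc1.1 (by omega) hc2.1 (by omega))

lemma card_lvSet (hc : G.Connected) (ha : G.IsAcyclic)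
    (hdeg : ∀ v, G.dist r v < n → G.degree v = k) :
    ∀ j, 1 ≤ j → j ≤ n → (lvSet G r j).card = k * (k - 1) ^ (j - 1) := by
  intro j
  induction j with
  | zero => omega
  | succ j IH =>
    intro _ hjn
    rw [lvSet_decomp hc ha, Finset.card_biUnion]
    swap
    · intro w1 hw1 w2 hw2 hne
      simp only [Finset.mem_coe, lvSet, Finset.mem_filter, Finset.mem_univ, true_and] at hw1 hw2
      exact chSet_disj hc ha hw1 hw2 hne
    have hsum : ∀ w ∈ lvSet G r j, (chSet G r w).card = if j = 0 then k else k - 1 := by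
      intro w hw
      simp only [lvSet, Finset.mem_filter, Finset.mem_univ, true_and] at hw
      rw [card_chSet hc ha hdeg (by omega), hw]
    rw [Finset.sum_congr rfl hsum, Finset.sum_const, smul_eq_mul]
    by_cases h0 : j = 0
    · subst h0
      rw [lvSet_zero hc, Finset.card_singleton, if_pos rfl]
      simp
    · rw [IH (by omega) (by omega), if_neg h0]
      have h1 : j + 1 - 1 = (j - 1) + 1 := by omega
      rw [h1, pow_succ]
      ring


lemma anc_eq_of_le (hc : G.Connected) {i j : ℕ} (hij : i ≤ j) (hju : j ≤ G.dist r u)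
    (hjv : j ≤ G.dist r v) (h : anc G r j u = anc G r j v) :
    anc G r i u = anc G r i v := by
  rw [← anc_anc hc hij hju, ← anc_anc hc hij hjv, h]

/-- characterization of the distance between two leaves via ancestors -/
lemma leaf_dist_iff (hc : G.Connected) (ha : G.IsAcyclic) {u v : V}
    (hu : G.dist r u = n) (hv : G.dist r v = n) {d : ℕ} (hd : d < n) :
    G.dist u v = 2 * (n - d) ↔
      (anc G r d u = anc G r d v ∧ anc G r (d + 1) u ≠ anc G r (d + 1) v) := by
  have hM := dist_add_meet (r := r) hc ha (G.dist u v) u v rfl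
  have hml := meet_le (G := G) (r := r) (u := u) (v := v)
  have hms := meet_spec (G := G) (r := r) (u := u) (v := v) hc
  constructor
  · intro hdist
    have hmeet : meetLv G r u v = d := by omega
    rw [hmeet] at hms
    refine ⟨hms, fun hcon => ?_⟩
    have := le_meet (u := u) (v := v) (j := d + 1) (by omega) hcon
    omega
  · rintro ⟨heq, hne⟩
    have h1 : d ≤ meetLv G r u v := le_meet (by omega) heq
    have h2 : meetLv G r u v ≤ d := by
      by_contra hcon
      push_neg at hcon
      exact hne (anc_eq_of_le hc (by omega) (by omega) (by omega) hms)
    omega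

/-- the finset of ordered pairs of leaves at distance `ℓ` -/
noncomputable def Pord (G : SimpleGraph V) (r : V) (n ℓ : ℕ) [Fintype V] : Finset (V × V) :=
  Finset.univ.filter (fun p => G.dist r p.1 = n ∧ G.dist r p.2 = n ∧ G.dist p.1 p.2 = ℓ)

variable [Fintype V] {n k : ℕ}

lemma Pord_fiber (hc : G.Connected) (ha : G.IsAcyclic) {d : ℕ} (hd : d < n) (w : V) :
    (Pord G r n (2 * (n - d))).filter (fun p => anc G r d p.1 = w) =
      ((Sd G r n d w) ×ˢ (Sd G r n d w)).filter
        (fun p => anc G r (d + 1) p.1 ≠ anc G r (d + 1) p.2) := by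
  ext p
  simp only [Pord, Sd, Finset.mem_filter, Finset.mem_univ, true_and, Finset.mem_product]
  constructor
  · rintro ⟨⟨h1, h2, h3⟩, h4⟩
    have := (leaf_dist_iff hc ha h1 h2 hd).1 h3
    exact ⟨⟨⟨h1, h4⟩, ⟨h2, by rw [← this.1, h4]⟩⟩, this.2⟩
  · rintro ⟨⟨⟨h1, h4⟩, ⟨h2, h5⟩⟩, hne⟩
    have heq : anc G r d p.1 = anc G r d p.2 := by rw [h4, h5]
    exact ⟨⟨h1, h2, (leaf_dist_iff hc ha h1 h2 hd).2 ⟨heq, hne⟩⟩, h4⟩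

lemma Pord_fiber_card (hc : G.Connected) (ha : G.IsAcyclic) (hn : 1 ≤ n)
    (hdeg : ∀ v, G.dist r v < n → G.degree v = k)
    {d : ℕ} (hd : d < n) {w : V} (hw : G.dist r w = d) :
    ((Pord G r n (2 * (n - d))).filter (fun p => anc G r d p.1 = w)).card =
      (Sd G r n d w).card ^ 2 -
        (if d = 0 then k else k - 1) * ((k - 1) ^ (n - d - 1)) ^ 2 := by
  classical
  rw [Pord_fiber hc ha hd w]
  have hsplit := Finset.card_filter_add_card_filter_not
    (s := (Sd G r n d w) ×ˢ (Sd G r n d w))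
    (p := fun p : V × V => anc G r (d + 1) p.1 = anc G r (d + 1) p.2)
  have hEq : ((Sd G r n d w) ×ˢ (Sd G r n d w)).filter
      (fun p => anc G r (d + 1) p.1 = anc G r (d + 1) p.2) =
      (chSet G r w).biUnion (fun c => (Sd G r n (d + 1) c) ×ˢ (Sd G r n (d + 1) c)) := by
    ext p
    simp only [Finset.mem_filter, Finset.mem_product, Finset.mem_biUnion]
    constructor
    · rintro ⟨⟨hp1, hp2⟩, heq⟩
      have hdec := Sd_decomp (r := r) hc ha hd hw
      have h1 : p.1 ∈ (chSet G r w).biUnion (fun c => Sd G r n (d + 1) c) := hdec ▸ hp1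
      have h2 : p.2 ∈ (chSet G r w).biUnion (fun c => Sd G r n (d + 1) c) := hdec ▸ hp2
      rw [Finset.mem_biUnion] at h1 h2
      obtain ⟨c1, hc1, hm1⟩ := h1
      obtain ⟨c2, hc2, hm2⟩ := h2
      have e1 : anc G r (d + 1) p.1 = c1 := by
        simp only [Sd, Finset.mem_filter] at hm1; exact hm1.2.2
      have e2 : anc G r (d + 1) p.2 = c2 := by
        simp only [Sd, Finset.mem_filter] at hm2; exact hm2.2.2
      have : c1 = c2 := by rw [← e1, ← e2, heq]
      subst this
      exact ⟨c1, hc1, hm1, hm2⟩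
    · rintro ⟨c, hcm, hm1, hm2⟩
      have hdec := Sd_decomp (r := r) hc ha hd hw
      have e1 : anc G r (d + 1) p.1 = c := by
        simp only [Sd, Finset.mem_filter] at hm1; exact hm1.2.2
      have e2 : anc G r (d + 1) p.2 = c := by
        simp only [Sd, Finset.mem_filter] at hm2; exact hm2.2.2
      refine ⟨⟨?_, ?_⟩, by rw [e1, e2]⟩
      · rw [hdec, Finset.mem_biUnion]; exact ⟨c, hcm, hm1⟩
      · rw [hdec, Finset.mem_biUnion]; exact ⟨c, hcm, hm2⟩
  have hcardEq : (((Sd G r n d w) ×ˢ (Sd G r n d w)).filter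
      (fun p => anc G r (d + 1) p.1 = anc G r (d + 1) p.2)).card =
      (if d = 0 then k else k - 1) * ((k - 1) ^ (n - d - 1)) ^ 2 := by
    rw [hEq, Finset.card_biUnion]
    · have hconst : ∀ c ∈ chSet G r w,
          ((Sd G r n (d + 1) c) ×ˢ (Sd G r n (d + 1) c)).card =
            ((k - 1) ^ (n - d - 1)) ^ 2 := by
        intro c hcm
        simp only [chSet, Finset.mem_filter, Finset.mem_univ, true_and] at hcm
        have hcard := card_Sd (r := r) hc ha hn hdeg (n - d - 1) (d + 1) (by omega) c (by omega)
        rw [if_neg (by omega)] at hcard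
        rw [Finset.card_product, hcard, sq]
      rw [Finset.sum_congr rfl hconst, Finset.sum_const, smul_eq_mul,
        card_chSet hc ha hdeg (by omega), hw]
    · intro c1 h1 c2 h2 hne
      rw [Function.onFun, Finset.disjoint_left]
      rintro ⟨p1, p2⟩ hm1 hm2
      simp only [Finset.mem_product] at hm1 hm2
      have := Finset.disjoint_left.1 (Sd_disj (G := G) (r := r) (n := n) (j := d + 1) hne)
        hm1.1 hm2.1
      exact this
  have hprod : ((Sd G r n d w) ×ˢ (Sd G r n d w)).card = (Sd G r n d w).card ^ 2 := by
    rw [Finset.card_product, sq]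
  simp only [ne_eq]
  beta_reduce at hsplit
  omega

lemma Pord_card (hc : G.Connected) (ha : G.IsAcyclic) (hn : 1 ≤ n)
    (hdeg : ∀ v, G.dist r v < n → G.degree v = k)
    (hle : ∀ v, G.dist r v ≤ n) {d : ℕ} (hd : d < n) :
    (Pord G r n (2 * (n - d))).card =
      (lvSet G r d).card *
        ((if d = 0 then k * (k - 1) ^ (n - 1) else (k - 1) ^ (n - d)) ^ 2 -
          (if d = 0 then k else k - 1) * ((k - 1) ^ (n - d - 1)) ^ 2) := by
  classical
  rw [Finset.card_eq_sum_card_fiberwise (f := fun p : V × V => anc G r d p.1)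
    (t := lvSet G r d) ?hmap]
  case hmap =>
    intro p hp
    simp only [Finset.mem_coe, Pord, Finset.mem_filter, Finset.mem_univ, true_and] at hp
    simp only [Finset.mem_coe, lvSet, Finset.mem_filter, Finset.mem_univ, true_and]
    exact anc_lv hc (by omega)
  have hconst : ∀ w ∈ lvSet G r d,
      ((Pord G r n (2 * (n - d))).filter (fun p => anc G r d p.1 = w)).card =
      ((if d = 0 then k * (k - 1) ^ (n - 1) else (k - 1) ^ (n - d)) ^ 2 -
          (if d = 0 then k else k - 1) * ((k - 1) ^ (n - d - 1)) ^ 2) := by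
    intro w hw
    simp only [lvSet, Finset.mem_filter, Finset.mem_univ, true_and] at hw
    rw [Pord_fiber_card hc ha hn hdeg hd hw]
    congr 1
    have := card_Sd (r := r) hc ha hn hdeg (n - d) d (by omega) w hw
    by_cases h0 : d = 0
    · rw [if_pos h0] at this ⊢
      rw [this]
    · rw [if_neg h0] at this ⊢
      rw [this]
  rw [Finset.sum_congr rfl hconst, Finset.sum_const, smul_eq_mul]


lemma two_choose (m : ℕ) : 2 * Nat.choose m 2 = m * (m - 1) := by
  rw [Nat.choose_two_right, Nat.two_mul_div_two_of_even (Nat.even_mul_pred_self m)]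

lemma Pord_card_eq_two_mul (hc : G.Connected) {ℓ : ℕ} (hl : ℓ ≠ 0)
    (hdegiff : ∀ v, G.degree v = 1 ↔ G.dist r v = n)
    {c : ℕ}
    (hcount : c = Nat.card {e : Sym2 V // ∃ u v : V, e = s(u, v) ∧ G.dist u v = ℓ ∧
      G.degree u = 1 ∧ G.degree v = 1}) :
    (Pord G r n ℓ).card = 2 * c := by
  classical
  have hpc : c = (Finset.univ.filter
      (fun e : Sym2 V => ∃ u v : V, e = s(u, v) ∧ G.dist u v = ℓ ∧
        G.degree u = 1 ∧ G.degree v = 1)).card := by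
    rw [hcount, Nat.card_eq_fintype_card]
    convert Fintype.card_subtype _
  set t := Finset.univ.filter
      (fun e : Sym2 V => ∃ u v : V, e = s(u, v) ∧ G.dist u v = ℓ ∧
        G.degree u = 1 ∧ G.degree v = 1) with ht
  rw [Finset.card_eq_sum_card_fiberwise (f := fun p : V × V => s(p.1, p.2))
    (t := t) ?hmap]
  case hmap =>
    intro p hp
    simp only [Finset.mem_coe, Pord, Finset.mem_filter, Finset.mem_univ, true_and] at hp
    simp only [Finset.mem_coe, ht, Finset.mem_filter, Finset.mem_univ, true_and]
    exact ⟨p.1, p.2, rfl, hp.2.2, (hdegiff p.1).2 hp.1, (hdegiff p.2).2 hp.2.1⟩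
  have hfib : ∀ e ∈ t, ((Pord G r n ℓ).filter (fun p : V × V => s(p.1, p.2) = e)).card = 2 := by
    intro e he
    simp only [ht, Finset.mem_filter, Finset.mem_univ, true_and] at he
    obtain ⟨u, v, rfl, hdist, hdu, hdv⟩ := he
    have hun : G.dist r u = n := (hdegiff u).1 hdu
    have hvn : G.dist r v = n := (hdegiff v).1 hdv
    have hne : u ≠ v := by
      intro h; subst h
      rw [SimpleGraph.dist_self] at hdist
      exact hl hdist.symm
    have hset : (Pord G r n ℓ).filter (fun p : V × V => s(p.1, p.2) = s(u, v)) =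
        {(u, v), (v, u)} := by
      ext p
      simp only [Pord, Finset.mem_filter, Finset.mem_univ, true_and,
        Finset.mem_insert, Finset.mem_singleton]
      constructor
      · rintro ⟨-, hmk⟩
        rcases Sym2.eq_iff.1 hmk with ⟨h1, h2⟩ | ⟨h1, h2⟩
        · left; exact Prod.ext h1 h2
        · right; exact Prod.ext h1 h2
      · rintro (rfl | rfl)
        · exact ⟨⟨hun, hvn, hdist⟩, rfl⟩
        · refine ⟨⟨hvn, hun, ?_⟩, Sym2.eq_iff.2 (Or.inr ⟨rfl, rfl⟩)⟩
          rw [G.dist_comm]; exact hdist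
    rw [hset, Finset.card_insert_of_notMem, Finset.card_singleton]
    simp only [Finset.mem_singleton]
    intro hcon
    exact hne (congrArg Prod.fst hcon)
  rw [Finset.sum_congr rfl hfib, Finset.sum_const, smul_eq_mul, mul_comm, hpc]

end Counting

end DendrimerAux


open DendrimerAux in
theorem dendrimer_pathCount2 {V : Type*} [Fintype V] (G : SimpleGraph V) (r : V)
    (n k : ℕ) (hn : 1 ≤ n) (hk : 3 ≤ k) (hG : IsDendrimer G r n k) :
    (∀ ℓ : ℕ, Even ℓ → 2 ≤ ℓ → ℓ ≤ 2 * n - 2 →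
      pathCount2 G ℓ = k * (k - 1) ^ (n + ℓ / 2 - 3) * Nat.choose (k - 1) 2) ∧
    pathCount2 G (2 * n) = (k - 1) ^ (2 * n - 2) * Nat.choose k 2 := by
  classical
  obtain ⟨hc, ha, hle, hex, hdeg, hleaf⟩ := hG
  have hdegiff : ∀ v, G.degree v = 1 ↔ G.dist r v = n := by
    intro v
    constructor
    · intro h1
      by_contra hne
      have hlt : G.dist r v < n := lt_of_le_of_ne (hle v) hne
      rw [hdeg v hlt] at h1
      omega
    · exact hleaf v
  obtain ⟨K, rfl⟩ : ∃ K, k = K + 2 := ⟨k - 2, by omega⟩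
  have hK : 1 ≤ K := by omega
  constructor
  · intro ℓ heven h2 hup
    obtain ⟨m, hm⟩ := heven
    have hm1 : 1 ≤ m := by omega
    have hmn : m + 1 ≤ n := by omega
    set d := n - m with hddef
    have hd1 : 1 ≤ d := by omega
    have hdlt : d < n := by omega
    have hℓ : ℓ = 2 * (n - d) := by omega
    have h1 := Pord_card (k := K + 2) hc ha hn hdeg hle hdlt
    have h2' := Pord_card_eq_two_mul (n := n) hc (ℓ := ℓ) (by omega) hdegiff
      (c := pathCount2 G ℓ) (by rw [pathCount2])
    rw [if_neg (by omega), if_neg (by omega)] at h1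
    rw [← hℓ] at h1
    have hlv := card_lvSet (k := K + 2) hc ha hdeg d (by omega) (by omega)
    refine Nat.eq_of_mul_eq_mul_left (show 0 < 2 by norm_num) ?_
    rw [← h2', h1, hlv]
    -- pure arithmetic
    obtain ⟨s, rfl⟩ : ∃ s, m = s + 1 := ⟨m - 1, by omega⟩
    obtain ⟨q, hq⟩ : ∃ q, d = q + 1 := ⟨d - 1, by omega⟩
    have hnd : n - d = s + 1 := by omega
    have hnd1 : n - d - 1 = s := by omega
    have hl2 : ℓ / 2 = s + 1 := by omega
    have hnm : n + ℓ / 2 - 3 = q + 2 * s := by omega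
    rw [hnd1, hnd, hq, hnm]
    simp only [Nat.add_sub_cancel, K.add_sub_cancel]
    have hKs : (K + 2) - 1 = K + 1 := by omega
    rw [hKs]
    have hsub : ((K + 1) ^ (s + 1)) ^ 2 - (K + 1) * ((K + 1) ^ s) ^ 2 =
        (K + 1) * ((K + 1) ^ s) ^ 2 * K := by
      have hA : ((K + 1) ^ (s + 1)) ^ 2 = ((K + 1) * ((K + 1) ^ s) ^ 2) * (K + 1) := by
        ring
      have hB : ((K + 1) * ((K + 1) ^ s) ^ 2) * (K + 1) =
          (K + 1) * ((K + 1) ^ s) ^ 2 * K + (K + 1) * ((K + 1) ^ s) ^ 2 := by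
        ring
      omega
    rw [hsub]
    have hch : 2 * Nat.choose (K + 1) 2 = (K + 1) * K := by
      have := two_choose (K + 1)
      simpa using this
    calc (K + 2) * (K + 1) ^ q * ((K + 1) * ((K + 1) ^ s) ^ 2 * K)
        = ((K + 2) * (K + 1) ^ (q + 2 * s)) * ((K + 1) * K) := by ring
      _ = ((K + 2) * (K + 1) ^ (q + 2 * s)) * (2 * Nat.choose (K + 1) 2) := by rw [hch]
      _ = 2 * ((K + 2) * (K + 1) ^ (q + 2 * s) * Nat.choose (K + 1) 2) := by ring
  · have hdlt : (0 : ℕ) < n := by omega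
    have h1 := Pord_card (k := K + 2) hc ha hn hdeg hle (d := 0) hdlt
    have h2' := Pord_card_eq_two_mul (n := n) hc (ℓ := 2 * n) (by omega) hdegiff
      (c := pathCount2 G (2 * n)) (by rw [pathCount2])
    have hn0 : n - 0 = n := by omega
    rw [hn0] at h1
    rw [if_pos rfl, if_pos rfl] at h1
    rw [lvSet_zero hc, Finset.card_singleton, one_mul] at h1
    refine Nat.eq_of_mul_eq_mul_left (show 0 < 2 by norm_num) ?_
    rw [← h2', h1]
    obtain ⟨t, rfl⟩ : ∃ t, n = t + 1 := ⟨n - 1, by omega⟩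
    have ht1 : t + 1 - 1 = t := by omega
    have ht2 : 2 * (t + 1) - 2 = 2 * t := by omega
    rw [ht1, ht2]
    have hKs : K + 2 - 1 = K + 1 := by omega
    rw [hKs]
    have hsub : ((K + 2) * (K + 1) ^ t) ^ 2 - (K + 2) * ((K + 1) ^ t) ^ 2 =
        (K + 2) * ((K + 1) ^ t) ^ 2 * (K + 1) := by
      have hA : ((K + 2) * (K + 1) ^ t) ^ 2 =
          ((K + 2) * ((K + 1) ^ t) ^ 2) * (K + 2) := by ring
      have hB : ((K + 2) * ((K + 1) ^ t) ^ 2) * (K + 2) =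
          (K + 2) * ((K + 1) ^ t) ^ 2 * (K + 1) + (K + 2) * ((K + 1) ^ t) ^ 2 := by
        ring
      omega
    rw [hsub]
    have hch : 2 * Nat.choose (K + 2) 2 = (K + 2) * (K + 1) := by
      have := two_choose (K + 2)
      simpa using this
    calc (K + 2) * ((K + 1) ^ t) ^ 2 * (K + 1)
        = (K + 1) ^ (2 * t) * ((K + 2) * (K + 1)) := by ring
      _ = (K + 1) ^ (2 * t) * (2 * Nat.choose (K + 2) 2) := by rw [hch]
      _ = 2 * ((K + 1) ^ (2 * t) * Nat.choose (K + 2) 2) := by ring
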